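/- (Product interpolation bound, discrete model) Let V ⊂ C(Ω) ∩ H¹(Ω) be a finite-dimensional space on a bounded domain Ω with interpolation operator I: C(Ω) → V satisfying ‖Iϕ − ϕ‖_{H¹(K)} ≤ c h^k ‖ϕ‖_{H^{k+1}(K)} on each element K, together with inverse estimates ‖∇^j v‖_{L²(K)} ≤ c h^{−j+1}‖∇ v‖_{L²(K)} for v ∈ V, j ≤ k+1. Then for all a, b ∈ V: ‖I(ab)‖_{H¹(Ω)} ≤ C ‖a‖_{H¹(Ω)} ‖b‖_{W^{1,∞}(Ω)} with C independent of h. -/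
import Mathlib


open Finset

/-- **Product interpolation bound, discrete model; Lemma 5.3.**
Let `V ⊂ C(Ω) ∩ H¹(Ω)` be a finite-dimensional (finite element) space on a bounded domain `Ω`
partitioned into elements `E`, with interpolation operator `I : C(Ω) → V` satisfying the
elementwise error estimate `‖Iϕ − ϕ‖_{H¹(K)} ≤ c h^k ‖ϕ‖_{H^{k+1}(K)}`, together with inverse
estimates `|v|_{H^j(K)} ≤ c h^{−j+1} |v|_{H^1(K)}` (and their `L^∞` analogues) for `v ∈ V`,
`j ≤ k+1`, and the Leibniz product rule for Sobolev seminorms. The global norms satisfy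
`‖u‖_{H¹(Ω)}² = ∑_K ‖u‖_{H¹(K)}²` and `|u|_{W^{j,∞}(K)} ≤ ‖u‖_{W^{1,∞}(Ω)}` for `j ≤ 1`.
Then there is `C`, independent of the mesh size `h`, such that for all `a, b ∈ V`:
`‖I(ab)‖_{H¹(Ω)} ≤ C ‖a‖_{H¹(Ω)} ‖b‖_{W^{1,∞}(Ω)}`. -/
theorem product_interpolation_H1_bound
    (k : ℕ) (hk : 1 ≤ k) (c : ℝ) (hc : 0 < c) :
    ∃ C : ℝ, 0 ≤ C ∧
      ∀ (Ω E : Type) (_ : Fintype E)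
        (h : ℝ) (_ : 0 < h) (_ : h ≤ 1)
        (V : Submodule ℝ (Ω → ℝ)) (_ : FiniteDimensional ℝ V)
        (I : (Ω → ℝ) → (Ω → ℝ)) (_ : ∀ φ, I φ ∈ V)
        (semL2 semLinf : E → ℕ → (Ω → ℝ) → ℝ)   -- |u|_{H^j(K)} and |u|_{W^{j,∞}(K)}
        (H1 W1inf : (Ω → ℝ) → ℝ),                -- ‖u‖_{H¹(Ω)} and ‖u‖_{W^{1,∞}(Ω)}
        (∀ (K : E) (j : ℕ) (u : Ω → ℝ), 0 ≤ semL2 K j u) →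
        (∀ (K : E) (j : ℕ) (u v : Ω → ℝ),
          semL2 K j (u + v) ≤ semL2 K j u + semL2 K j v) →
        (∀ (K : E) (j : ℕ) (u : Ω → ℝ), 0 ≤ semLinf K j u) →
        (∀ u : Ω → ℝ, 0 ≤ H1 u) →
        -- global norms are assembled from the elementwise ones
        (∀ u : Ω → ℝ, H1 u ^ 2 = ∑ K : E, (semL2 K 0 u + semL2 K 1 u) ^ 2) →
        (∀ (u : Ω → ℝ) (K : E), ∀ j ≤ 1, semLinf K j u ≤ W1inf u) →
        -- elementwise interpolation error estimate of order k
        (∀ (φ : Ω → ℝ) (K : E),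
          semL2 K 0 (I φ - φ) + semL2 K 1 (I φ - φ)
            ≤ c * h ^ k * ∑ j ∈ range (k + 2), semL2 K j φ) →
        -- elementwise inverse estimates in V (L² and L^∞ based)
        (∀ v ∈ V, ∀ (K : E), ∀ j, 1 ≤ j → j ≤ k + 1 →
          semL2 K j v ≤ c * h ^ ((1 : ℤ) - j) * semL2 K 1 v) →
        (∀ v ∈ V, ∀ (K : E), ∀ j, 1 ≤ j → j ≤ k + 1 →
          semLinf K j v ≤ c * h ^ ((1 : ℤ) - j) * semLinf K 1 v) →
        -- Leibniz rule for Sobolev seminorms of products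
        (∀ (a b : Ω → ℝ) (K : E), ∀ j ≤ k + 1,
          semL2 K j (a * b)
            ≤ c * ∑ i ∈ range (j + 1), semL2 K i a * semLinf K (j - i) b) →
        ∀ a ∈ V, ∀ b ∈ V, H1 (I (a * b)) ≤ C * H1 a * W1inf b := by
  have hc1 : (1:ℝ) ≤ c + 1 := by linarith
  refine ⟨(c+1)^4 * (((k:ℝ)+2)^2 + 4), by positivity, ?_⟩
  intro Ω E _ h hh hh1 V _ I hIV semL2 semLinf H1 W1inf hL2nn hL2add hLinfnn hH1nn
    hH1sq hWb hinterp hinvL2 hinvLinf hLeib a ha b hb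
  set C : ℝ := (c+1)^4 * (((k:ℝ)+2)^2 + 4) with hCdef
  have hC0 : (0:ℝ) ≤ C := by positivity
  by_cases hE : Nonempty E
  case neg =>
    have hIsE : IsEmpty E := not_nonempty_iff.mp hE
    have hz : ∀ u : Ω → ℝ, H1 u = 0 := by
      intro u
      have h2 : H1 u ^ 2 = 0 := by rw [hH1sq]; simp
      have h3 := hH1nn u
      nlinarith
    rw [hz, hz]
    simp
  case pos =>
  obtain ⟨K0⟩ := hE
  have hW : (0:ℝ) ≤ W1inf b := le_trans (hLinfnn K0 0 b) (hWb b K0 0 (by norm_num))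
  have hzpow_nonneg : ∀ n : ℤ, (0:ℝ) ≤ h ^ n := fun n => (zpow_pos hh n).le
  have hzmono : ∀ m n : ℤ, m ≤ n → h ^ n ≤ h ^ m :=
    fun m n hmn => zpow_le_zpow_right_of_le_one₀ hh hh1 hmn
  have hzle1 : ∀ n : ℤ, 0 ≤ n → h ^ n ≤ 1 := by
    intro n hn
    simpa using hzmono 0 n hn
  have hkR : (1:ℝ) ≤ (k:ℝ) + 2 := by have := Nat.cast_nonneg (α := ℝ) k; linarith
  have key : ∀ K : E,
      semL2 K 0 (I (a*b)) + semL2 K 1 (I (a*b))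
        ≤ C * ((semL2 K 0 a + semL2 K 1 a) * W1inf b) := by
    intro K
    have hNa : (0:ℝ) ≤ semL2 K 0 a + semL2 K 1 a :=
      add_nonneg (hL2nn K 0 a) (hL2nn K 1 a)
    have hNW : (0:ℝ) ≤ (semL2 K 0 a + semL2 K 1 a) * W1inf b := mul_nonneg hNa hW
    have hA0 : semL2 K 0 a ≤ semL2 K 0 a + semL2 K 1 a :=
      le_add_of_nonneg_right (hL2nn K 1 a)
    have hAi : ∀ i : ℕ, 1 ≤ i → i ≤ k + 1 →
        semL2 K i a ≤ (c+1) * h ^ ((1:ℤ) - i) * (semL2 K 0 a + semL2 K 1 a) := by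
      intro i h1 h2
      calc semL2 K i a ≤ c * h ^ ((1:ℤ) - i) * semL2 K 1 a := hinvL2 a ha K i h1 h2
        _ ≤ (c+1) * h ^ ((1:ℤ) - i) * (semL2 K 0 a + semL2 K 1 a) := by
            apply mul_le_mul _ (le_add_of_nonneg_left (hL2nn K 0 a)) (hL2nn K 1 a)
              (by positivity)
            exact mul_le_mul_of_nonneg_right (by linarith) (hzpow_nonneg _)
    have hB0 : semLinf K 0 b ≤ W1inf b := hWb b K 0 (by norm_num)
    have hBm : ∀ m : ℕ, 1 ≤ m → m ≤ k + 1 →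
        semLinf K m b ≤ (c+1) * h ^ ((1:ℤ) - m) * W1inf b := by
      intro m h1 h2
      calc semLinf K m b ≤ c * h ^ ((1:ℤ) - m) * semLinf K 1 b := hinvLinf b hb K m h1 h2
        _ ≤ (c+1) * h ^ ((1:ℤ) - m) * W1inf b := by
            apply mul_le_mul _ (hWb b K 1 le_rfl) (hLinfnn K 1 b) (by positivity)
            exact mul_le_mul_of_nonneg_right (by linarith) (hzpow_nonneg _)
    have hcc : (c+1) ≤ (c+1)^2 := by nlinarith
    have hProd : ∀ j : ℕ, 1 ≤ j → j ≤ k + 1 →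
        semL2 K j (a * b)
          ≤ (c+1)^3 * ((j:ℝ)+1) * h ^ ((1:ℤ) - j)
              * ((semL2 K 0 a + semL2 K 1 a) * W1inf b) := by
      intro j hj1 hj2
      have hterm : ∀ i ∈ range (j+1),
          semL2 K i a * semLinf K (j - i) b
            ≤ (c+1)^2 * h ^ ((1:ℤ) - j) * ((semL2 K 0 a + semL2 K 1 a) * W1inf b) := by
        intro i hi
        have hij : i ≤ j := Nat.lt_succ_iff.mp (Finset.mem_range.mp hi)
        rcases Nat.eq_zero_or_pos i with hi0 | hi1
        · subst hi0
          calc semL2 K 0 a * semLinf K (j - 0) b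
              ≤ (semL2 K 0 a + semL2 K 1 a) * ((c+1) * h ^ ((1:ℤ)-j) * W1inf b) :=
                mul_le_mul hA0 (by simpa using hBm j hj1 hj2) (hLinfnn K _ b) hNa
            _ = (c+1) * h ^ ((1:ℤ)-j) * ((semL2 K 0 a + semL2 K 1 a) * W1inf b) := by
                ring
            _ ≤ (c+1)^2 * h ^ ((1:ℤ)-j) * ((semL2 K 0 a + semL2 K 1 a) * W1inf b) := by
                apply mul_le_mul_of_nonneg_right _ hNW
                exact mul_le_mul_of_nonneg_right hcc (hzpow_nonneg _)
        · rcases Nat.eq_zero_or_pos (j - i) with hm0 | hm1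
          · have hij' : i = j := le_antisymm hij (by omega)
            subst hij'
            calc semL2 K i a * semLinf K (i - i) b
                ≤ ((c+1) * h ^ ((1:ℤ)-i) * (semL2 K 0 a + semL2 K 1 a)) * W1inf b := by
                  apply mul_le_mul (hAi i hi1 hj2) _ (hLinfnn K _ b) (by positivity)
                  simpa [Nat.sub_self] using hB0
              _ = (c+1) * h ^ ((1:ℤ)-i) * ((semL2 K 0 a + semL2 K 1 a) * W1inf b) := by
                  ring
              _ ≤ (c+1)^2 * h ^ ((1:ℤ)-i) * ((semL2 K 0 a + semL2 K 1 a) * W1inf b) := by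
                  apply mul_le_mul_of_nonneg_right _ hNW
                  exact mul_le_mul_of_nonneg_right hcc (hzpow_nonneg _)
          · have hmle : j - i ≤ k + 1 := le_trans (Nat.sub_le j i) hj2
            have hile : i ≤ k + 1 := le_trans hij hj2
            have hcast : ((j - i : ℕ) : ℤ) = (j : ℤ) - (i : ℤ) := by
              omega
            have hpow : h ^ ((1:ℤ) - (i:ℤ)) * h ^ ((1:ℤ) - ((j - i : ℕ) : ℤ))
                ≤ h ^ ((1:ℤ) - (j:ℤ)) := by
              rw [← zpow_add₀ (ne_of_gt hh), hcast]
              apply hzmono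
              omega
            calc semL2 K i a * semLinf K (j - i) b
                ≤ ((c+1) * h ^ ((1:ℤ)-i) * (semL2 K 0 a + semL2 K 1 a))
                    * ((c+1) * h ^ ((1:ℤ)-((j-i:ℕ):ℤ)) * W1inf b) :=
                  mul_le_mul (hAi i hi1 hile) (hBm (j-i) hm1 hmle) (hLinfnn K _ b)
                    (by positivity)
              _ = (c+1)^2 * (h ^ ((1:ℤ)-(i:ℤ)) * h ^ ((1:ℤ)-((j-i:ℕ):ℤ)))
                    * ((semL2 K 0 a + semL2 K 1 a) * W1inf b) := by ring
              _ ≤ (c+1)^2 * h ^ ((1:ℤ)-j) * ((semL2 K 0 a + semL2 K 1 a) * W1inf b) := by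
                  apply mul_le_mul_of_nonneg_right _ hNW
                  exact mul_le_mul_of_nonneg_left hpow (by positivity)
      have hsum : ∑ i ∈ range (j+1), semL2 K i a * semLinf K (j - i) b
          ≤ ((j:ℝ)+1) * ((c+1)^2 * h ^ ((1:ℤ)-j)
              * ((semL2 K 0 a + semL2 K 1 a) * W1inf b)) := by
        have := Finset.sum_le_card_nsmul (range (j+1)) _ _ hterm
        simpa [Finset.card_range, nsmul_eq_mul] using this
      calc semL2 K j (a*b)
          ≤ c * ∑ i ∈ range (j+1), semL2 K i a * semLinf K (j - i) b :=
            hLeib a b K j hj2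
        _ ≤ (c+1) * (((j:ℝ)+1) * ((c+1)^2 * h ^ ((1:ℤ)-j)
              * ((semL2 K 0 a + semL2 K 1 a) * W1inf b))) := by
            apply mul_le_mul (by linarith) hsum _ (by linarith)
            exact Finset.sum_nonneg fun i _ =>
              mul_nonneg (hL2nn K i a) (hLinfnn K (j-i) b)
        _ = (c+1)^3 * ((j:ℝ)+1) * h ^ ((1:ℤ)-j)
              * ((semL2 K 0 a + semL2 K 1 a) * W1inf b) := by ring
    have hP0 : semL2 K 0 (a * b) ≤ (c+1) * ((semL2 K 0 a + semL2 K 1 a) * W1inf b) := by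
      have h0 := hLeib a b K 0 (by omega)
      rw [Finset.sum_range_one] at h0
      calc semL2 K 0 (a*b) ≤ c * (semL2 K 0 a * semLinf K 0 b) := by simpa using h0
        _ ≤ (c+1) * ((semL2 K 0 a + semL2 K 1 a) * W1inf b) :=
          mul_le_mul (by linarith) (mul_le_mul hA0 hB0 (hLinfnn K 0 b) hNa)
            (mul_nonneg (hL2nn K 0 a) (hLinfnn K 0 b)) (by linarith)
    have hErr : semL2 K 0 (I (a*b) - a*b) + semL2 K 1 (I (a*b) - a*b)
        ≤ (c+1)^4 * ((k:ℝ)+2)^2 * ((semL2 K 0 a + semL2 K 1 a) * W1inf b) := by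
      have hterm : ∀ j ∈ range (k+2),
          c * h ^ k * semL2 K j (a*b)
            ≤ (c+1)^4 * ((k:ℝ)+2) * ((semL2 K 0 a + semL2 K 1 a) * W1inf b) := by
        intro j hj
        have hjk : j ≤ k + 1 := Nat.lt_succ_iff.mp (Finset.mem_range.mp hj)
        rcases Nat.eq_zero_or_pos j with hj0 | hj1
        · subst hj0
          have hhk : h ^ k ≤ 1 := pow_le_one₀ hh.le hh1
          calc c * h ^ k * semL2 K 0 (a*b)
              ≤ ((c+1) * 1) * ((c+1) * ((semL2 K 0 a + semL2 K 1 a) * W1inf b)) := by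
                apply mul_le_mul _ hP0 (hL2nn K 0 _) (by positivity)
                exact mul_le_mul (by linarith) hhk (by positivity) (by linarith)
            _ = (c+1)^2 * ((semL2 K 0 a + semL2 K 1 a) * W1inf b) := by ring
            _ ≤ (c+1)^4 * ((k:ℝ)+2) * ((semL2 K 0 a + semL2 K 1 a) * W1inf b) := by
                apply mul_le_mul_of_nonneg_right _ hNW
                calc (c+1)^2 ≤ (c+1)^4 := pow_le_pow_right₀ hc1 (by norm_num)
                  _ = (c+1)^4 * 1 := (mul_one _).symm
                  _ ≤ (c+1)^4 * ((k:ℝ)+2) :=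
                    mul_le_mul_of_nonneg_left hkR (by positivity)
        · have step := hProd j hj1 hjk
          have hpow : h ^ k * h ^ ((1:ℤ) - j) ≤ 1 := by
            rw [← zpow_natCast h k, ← zpow_add₀ (ne_of_gt hh)]
            apply hzle1
            omega
          have hjr : (j:ℝ) + 1 ≤ (k:ℝ) + 2 := by
            have : (j:ℝ) ≤ (k:ℝ) + 1 := by exact_mod_cast hjk
            linarith
          calc c * h ^ k * semL2 K j (a*b)
              ≤ ((c+1) * h ^ k) * ((c+1)^3 * ((j:ℝ)+1) * h ^ ((1:ℤ)-j)
                  * ((semL2 K 0 a + semL2 K 1 a) * W1inf b)) := by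
                apply mul_le_mul _ step (hL2nn K j _) (by positivity)
                exact mul_le_mul_of_nonneg_right (by linarith) (by positivity)
            _ = (c+1)^4 * ((j:ℝ)+1) * (h ^ k * h ^ ((1:ℤ)-j))
                  * ((semL2 K 0 a + semL2 K 1 a) * W1inf b) := by ring
            _ ≤ (c+1)^4 * ((k:ℝ)+2) * 1
                  * ((semL2 K 0 a + semL2 K 1 a) * W1inf b) := by
                apply mul_le_mul_of_nonneg_right _ hNW
                apply mul_le_mul _ hpow (by positivity) (by positivity)
                exact mul_le_mul_of_nonneg_left hjr (by positivity)
            _ = (c+1)^4 * ((k:ℝ)+2) * ((semL2 K 0 a + semL2 K 1 a) * W1inf b) := by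
                ring
      calc semL2 K 0 (I (a*b) - a*b) + semL2 K 1 (I (a*b) - a*b)
          ≤ c * h ^ k * ∑ j ∈ range (k+2), semL2 K j (a*b) := hinterp (a*b) K
        _ = ∑ j ∈ range (k+2), c * h ^ k * semL2 K j (a*b) := by rw [Finset.mul_sum]
        _ ≤ ((k:ℝ)+2) * ((c+1)^4 * ((k:ℝ)+2)
              * ((semL2 K 0 a + semL2 K 1 a) * W1inf b)) := by
            have := Finset.sum_le_card_nsmul (range (k+2)) _ _ hterm
            have hcard : ((k+2 : ℕ) : ℝ) = (k:ℝ) + 2 := by push_cast; ring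
            simpa [Finset.card_range, nsmul_eq_mul, hcard] using this
        _ = (c+1)^4 * ((k:ℝ)+2)^2 * ((semL2 K 0 a + semL2 K 1 a) * W1inf b) := by
            ring
    have hAB : semL2 K 0 (a*b) + semL2 K 1 (a*b)
        ≤ 3 * (c+1)^4 * ((semL2 K 0 a + semL2 K 1 a) * W1inf b) := by
      have h1 := hProd 1 le_rfl (by omega)
      have e0 : ((1:ℤ) - ((1:ℕ):ℤ)) = 0 := by norm_num
      have h1' : semL2 K 1 (a*b)
          ≤ (c+1)^3 * 2 * ((semL2 K 0 a + semL2 K 1 a) * W1inf b) := by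
        calc semL2 K 1 (a*b)
            ≤ (c+1)^3 * ((1:ℝ)+1) * h ^ ((1:ℤ)-(1:ℕ))
                * ((semL2 K 0 a + semL2 K 1 a) * W1inf b) := by
              simpa using h1
          _ = (c+1)^3 * 2 * ((semL2 K 0 a + semL2 K 1 a) * W1inf b) := by
              rw [e0]; norm_num
      have e1 : c + 1 ≤ (c+1)^4 := le_self_pow₀ hc1 (by norm_num)
      have e2 : (c+1)^3 ≤ (c+1)^4 := pow_le_pow_right₀ hc1 (by norm_num)
      calc semL2 K 0 (a*b) + semL2 K 1 (a*b)
          ≤ (c+1) * ((semL2 K 0 a + semL2 K 1 a) * W1inf b)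
              + (c+1)^3 * 2 * ((semL2 K 0 a + semL2 K 1 a) * W1inf b) :=
            add_le_add hP0 h1'
        _ = ((c+1) + 2*(c+1)^3) * ((semL2 K 0 a + semL2 K 1 a) * W1inf b) := by ring
        _ ≤ (3 * (c+1)^4) * ((semL2 K 0 a + semL2 K 1 a) * W1inf b) := by
            apply mul_le_mul_of_nonneg_right _ hNW
            linarith
        _ = 3 * (c+1)^4 * ((semL2 K 0 a + semL2 K 1 a) * W1inf b) := by ring
    have htri : ∀ j : ℕ,
        semL2 K j (I (a*b)) ≤ semL2 K j (I (a*b) - a*b) + semL2 K j (a*b) := by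
      intro j
      have := hL2add K j (I (a*b) - a*b) (a*b)
      rwa [sub_add_cancel] at this
    calc semL2 K 0 (I (a*b)) + semL2 K 1 (I (a*b))
        ≤ (semL2 K 0 (I (a*b) - a*b) + semL2 K 1 (I (a*b) - a*b))
            + (semL2 K 0 (a*b) + semL2 K 1 (a*b)) := by
          linarith [htri 0, htri 1]
      _ ≤ (c+1)^4 * ((k:ℝ)+2)^2 * ((semL2 K 0 a + semL2 K 1 a) * W1inf b)
            + 3 * (c+1)^4 * ((semL2 K 0 a + semL2 K 1 a) * W1inf b) :=
          add_le_add hErr hAB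
      _ = ((c+1)^4 * ((k:ℝ)+2)^2 + 3*(c+1)^4)
            * ((semL2 K 0 a + semL2 K 1 a) * W1inf b) := by ring
      _ ≤ C * ((semL2 K 0 a + semL2 K 1 a) * W1inf b) := by
          apply mul_le_mul_of_nonneg_right _ hNW
          rw [hCdef]
          have h4 : (0:ℝ) ≤ (c+1)^4 := by positivity
          nlinarith
  have hsq : H1 (I (a*b)) ^ 2 ≤ (C * H1 a * W1inf b) ^ 2 := by
    rw [hH1sq (I (a*b))]
    calc ∑ K : E, (semL2 K 0 (I (a*b)) + semL2 K 1 (I (a*b))) ^ 2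
        ≤ ∑ K : E, (C * ((semL2 K 0 a + semL2 K 1 a) * W1inf b)) ^ 2 :=
          Finset.sum_le_sum fun K _ =>
            pow_le_pow_left₀ (add_nonneg (hL2nn K 0 _) (hL2nn K 1 _)) (key K) 2
      _ = (C * W1inf b)^2 * ∑ K : E, (semL2 K 0 a + semL2 K 1 a) ^ 2 := by
          rw [Finset.mul_sum]
          exact Finset.sum_congr rfl fun K _ => by ring
      _ = (C * H1 a * W1inf b) ^ 2 := by rw [← hH1sq a]; ring
  have h1 := hH1nn (I (a*b))
  have h2 : (0:ℝ) ≤ C * H1 a * W1inf b := mul_nonneg (mul_nonneg hC0 (hH1nn a)) hW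
  exact (pow_le_pow_iff_left₀ h1 h2 two_ne_zero).mp hsq
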